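/- Let c31, c32 ∈ ℝ and let F be a C¹ real-valued function on a connected open subset of {(y1, y2) ∈ ℝ² : y2 > 0}. Then F satisfies the system y2 ∂F/∂y1 = c32 and 2 y1 ∂F/∂y1 + y2 ∂F/∂y2 = F + c31 y2 if and only if there is a constant D ∈ ℝ such that F(y1, y2) = c32 · y1/y2 + c31 · y2 · ln y2 + D · y2. -/

import Mathlib

lemma const_of_fderiv_zero {f : ℝ × ℝ → ℝ} {s : Set (ℝ × ℝ)} (hs : IsOpen s)
    (hc : IsPreconnected s) (hf : DifferentiableOn ℝ f s)
    (h0 : ∀ x ∈ s, fderiv ℝ f x = 0) {x y : ℝ × ℝ} (hx : x ∈ s) (hy : y ∈ s) :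
    f x = f y := by
  have key : ∀ z ∈ s, ∀ᶠ w in nhds z, f w = f z ∧ w ∈ s := by
    intro z hz
    obtain ⟨ε, hε, hball⟩ := Metric.isOpen_iff.1 hs z hz
    have hconst : ∀ w ∈ Metric.ball z ε, f w = f z ∧ w ∈ s := by
      intro w hw
      refine ⟨(convex_ball z ε).is_const_of_fderivWithin_eq_zero
        (hf.mono hball) (fun u hu => ?_) hw (Metric.mem_ball_self hε), hball hw⟩
      rw [fderivWithin_of_isOpen Metric.isOpen_ball hu]
      exact h0 u (hball hu)
    exact Filter.eventually_of_mem (Metric.ball_mem_nhds z hε) hconst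
  have hV : IsOpen {w | w ∈ s ∧ f w = f x} := by
    rw [isOpen_iff_mem_nhds]
    intro z hz
    filter_upwards [key z hz.1] with w hw
    exact ⟨hw.2, hw.1.trans hz.2⟩
  have hW : IsOpen {w | w ∈ s ∧ f w ≠ f x} := by
    rw [isOpen_iff_mem_nhds]
    intro z hz
    filter_upwards [key z hz.1] with w hw
    exact ⟨hw.2, hw.1.trans_ne hz.2⟩
  by_contra hne
  obtain ⟨w, hws, hw1, hw2⟩ := hc _ _ hV hW
    (fun z hz => by by_cases h : f z = f x
                    exacts [Or.inl ⟨hz, h⟩, Or.inr ⟨hz, h⟩])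
    ⟨x, hx, hx, rfl⟩ ⟨y, hy, hy, fun h => hne h.symm⟩
  exact hw2.2 hw1.2

lemma hasFDeriv_formula (c31 c32 D : ℝ) (p : ℝ × ℝ) (hp : 0 < p.2) :
    ∃ L : ℝ × ℝ →L[ℝ] ℝ, HasFDerivAt
      (fun q : ℝ × ℝ => c32 * q.1 / q.2 + c31 * q.2 * Real.log q.2 + D * q.2) L p
      ∧ L (1, 0) = c32 / p.2
      ∧ L (0, 1) = -(c32 * p.1) / p.2 ^ 2 + c31 * (Real.log p.2 + 1) + D := by
  have hne : p.2 ≠ 0 := ne_of_gt hp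
  have h1 : HasFDerivAt (fun q : ℝ × ℝ => q.1) (ContinuousLinearMap.fst ℝ ℝ ℝ) p :=
    hasFDerivAt_fst
  have h2 : HasFDerivAt (fun q : ℝ × ℝ => q.2) (ContinuousLinearMap.snd ℝ ℝ ℝ) p :=
    hasFDerivAt_snd
  have hinv : HasFDerivAt (fun q : ℝ × ℝ => (q.2)⁻¹)
      ((-(p.2 ^ 2)⁻¹) • ContinuousLinearMap.snd ℝ ℝ ℝ) p :=
    (hasDerivAt_inv hne).comp_hasFDerivAt p h2
  have heq : (fun q : ℝ × ℝ => c32 * q.1 / q.2) = fun q => (c32 * q.1) * (q.2)⁻¹ := by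
    funext q; rw [div_eq_mul_inv]
  have hdiv : HasFDerivAt (fun q : ℝ × ℝ => (c32 * q.1) * (q.2)⁻¹) _ p := (h1.const_mul c32).mul hinv
  rw [← heq] at hdiv
  have hlog := h2.log hne
  have hmul := (h2.const_mul c31).mul hlog
  have hD := h2.const_mul D
  refine ⟨_, (hdiv.add hmul).add hD, ?_, ?_⟩ <;>
    · simp
      try field_simp
      try ring

/-- On a connected open subset of the half-plane `{y2 > 0}`, a `C¹` function `F`
satisfies `y2 ∂F/∂y1 = c32` and `2 y1 ∂F/∂y1 + y2 ∂F/∂y2 = F + c31 y2` iff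
`F(y1,y2) = c32 y1/y2 + c31 y2 ln y2 + D y2` for some constant `D`. -/
theorem stmt11 (c31 c32 : ℝ) (U : Set (ℝ × ℝ)) (hUopen : IsOpen U)
    (hUconn : IsConnected U) (hU : ∀ p ∈ U, 0 < p.2)
    (F : ℝ × ℝ → ℝ) (hF : ContDiffOn ℝ 1 F U) :
    ((∀ p ∈ U, p.2 * fderiv ℝ F p (1, 0) = c32) ∧
      (∀ p ∈ U, 2 * p.1 * fderiv ℝ F p (1, 0) + p.2 * fderiv ℝ F p (0, 1) =
        F p + c31 * p.2)) ↔
      ∃ D : ℝ, ∀ p ∈ U,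
        F p = c32 * p.1 / p.2 + c31 * p.2 * Real.log p.2 + D * p.2 := by
  constructor
  · rintro ⟨heq1, heq2⟩
    -- H = F/y2 - c32 y1/y2² - c31 log y2 has zero derivative on U
    set H : ℝ × ℝ → ℝ := fun q =>
      F q * (q.2)⁻¹ - c32 * q.1 * ((q.2)⁻¹ * (q.2)⁻¹) - c31 * Real.log q.2 with hHdef
    have hderivH : ∀ p ∈ U, ∃ L : ℝ × ℝ →L[ℝ] ℝ, HasFDerivAt H L p ∧ L = 0 := by
      intro p hp
      have hp2 : 0 < p.2 := hU p hp
      have hne : p.2 ≠ 0 := ne_of_gt hp2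
      have hFd : HasFDerivAt F (fderiv ℝ F p) p :=
        ((hF p hp).contDiffAt (hUopen.mem_nhds hp)).differentiableAt
          one_ne_zero |>.hasFDerivAt
      have h1 : HasFDerivAt (fun q : ℝ × ℝ => q.1) (ContinuousLinearMap.fst ℝ ℝ ℝ) p :=
        hasFDerivAt_fst
      have h2 : HasFDerivAt (fun q : ℝ × ℝ => q.2) (ContinuousLinearMap.snd ℝ ℝ ℝ) p :=
        hasFDerivAt_snd
      have hinv : HasFDerivAt (fun q : ℝ × ℝ => (q.2)⁻¹)
          ((-(p.2 ^ 2)⁻¹) • ContinuousLinearMap.snd ℝ ℝ ℝ) p :=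
        (hasDerivAt_inv hne).comp_hasFDerivAt p h2
      have hH : HasFDerivAt H _ p :=
        ((hFd.mul hinv).sub ((h1.const_mul c32).mul (hinv.mul hinv))).sub
          ((h2.log hne).const_mul c31)
      refine ⟨_, hH, ?_⟩
      have d1 : fderiv ℝ F p (1, 0) = c32 / p.2 := by
        have := heq1 p hp; field_simp at this ⊢; linarith
      have d2 : fderiv ℝ F p (0, 1) =
          (F p + c31 * p.2 - 2 * p.1 * (c32 / p.2)) / p.2 := by
        have h := heq2 p hp
        rw [d1] at h
        field_simp at h ⊢
        linarith
      refine ContinuousLinearMap.ext fun v => ?_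
      have hv : v = v.1 • ((1 : ℝ), (0 : ℝ)) + v.2 • ((0 : ℝ), (1 : ℝ)) := by
        simp [Prod.ext_iff]
      have expand : (fderiv ℝ F p) v =
          v.1 * (fderiv ℝ F p) (1, 0) + v.2 * (fderiv ℝ F p) (0, 1) := by
        conv_lhs => rw [hv]
        rw [map_add, map_smul, map_smul, smul_eq_mul, smul_eq_mul]
      simp [expand, d1, d2]
      field_simp
      ring
    have hdiffH : DifferentiableOn ℝ H U := fun p hp => by
      obtain ⟨L, hL, -⟩ := hderivH p hp
      exact hL.differentiableAt.differentiableWithinAt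
    have h0 : ∀ p ∈ U, fderiv ℝ H p = 0 := by
      intro p hp
      obtain ⟨L, hL, hL0⟩ := hderivH p hp
      rw [hL.fderiv, hL0]
    obtain ⟨p0, hp0⟩ := hUconn.nonempty
    refine ⟨H p0, fun p hp => ?_⟩
    have hHp : H p = H p0 :=
      const_of_fderiv_zero hUopen hUconn.isPreconnected hdiffH h0 hp hp0
    have hp2 : (0 : ℝ) < p.2 := hU p hp
    have hne : p.2 ≠ 0 := ne_of_gt hp2
    have hkey : F p * (p.2)⁻¹ =
        H p0 + c32 * p.1 * ((p.2)⁻¹ * (p.2)⁻¹) + c31 * Real.log p.2 := by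
      have : F p * (p.2)⁻¹ - c32 * p.1 * ((p.2)⁻¹ * (p.2)⁻¹) - c31 * Real.log p.2
          = H p0 := hHp
      linarith
    have hFp : F p = F p * (p.2)⁻¹ * p.2 := by field_simp
    rw [hFp, hkey]
    field_simp
    ring
  · rintro ⟨D, hFeq⟩
    have key : ∀ p ∈ U, fderiv ℝ F p (1, 0) = c32 / p.2 ∧
        fderiv ℝ F p (0, 1) = -(c32 * p.1) / p.2 ^ 2 + c31 * (Real.log p.2 + 1) + D := by
      intro p hp
      obtain ⟨L, hL, hL1, hL2⟩ := hasFDeriv_formula c31 c32 D p (hU p hp)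
      have hFe : F =ᶠ[nhds p]
          fun q : ℝ × ℝ => c32 * q.1 / q.2 + c31 * q.2 * Real.log q.2 + D * q.2 :=
        Filter.eventually_of_mem (hUopen.mem_nhds hp) hFeq
      have hFd : HasFDerivAt F L p := hL.congr_of_eventuallyEq hFe
      rw [hFd.fderiv]
      exact ⟨hL1, hL2⟩
    constructor
    · intro p hp
      have hne : p.2 ≠ 0 := ne_of_gt (hU p hp)
      rw [(key p hp).1]
      field_simp
    · intro p hp
      have hne : p.2 ≠ 0 := ne_of_gt (hU p hp)
      rw [(key p hp).1, (key p hp).2, hFeq p hp]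
      field_simp
      ring
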